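/- Let d ≥ 2 and let T^com be the complete infinite d-ary rooted tree. If G is a finite index subgroup of Aut(T^com), then the Minkowski dimension dim(G) exists and dim(G) = 1. -/

import Mathlib

open scoped Classical

noncomputable section

/-! ### Minkowski dimension machinery for groups of automorphisms of rooted trees

A rooted tree is presented by its levels `V 0, V 1, V 2, …` (with `V 0` the root level)
together with parent maps `V (n+1) → V n`.  An automorphism is a family of permutations
of the levels commuting with the parent maps; it is in particular determined by a point of
`∀ k, Equiv.Perm (V k)`.  The restriction `r_n σ` of `σ` to the height-`n` subtree is the
tuple `(σ 0, …, σ n)`, and the natural metric is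
`d(σ,τ) = inf { d!^{-(dⁿ-1)/(d-1)} : r_n σ = r_n τ }`. -/

/-- The exponent `(dⁿ - 1)/(d - 1) = 1 + d + ⋯ + d^(n-1)`. -/
def scaleExp (d n : ℕ) : ℕ := ∑ i ∈ Finset.range n, d ^ i

/-- The scale `ε_n = d!^{-(dⁿ-1)/(d-1)}`, i.e. `1/|Aut(Tₙᶜᵒᵐ)|`. -/
def treeScale (d n : ℕ) : ℝ := ((d.factorial : ℝ) ^ scaleExp d n)⁻¹

/-- Two families of level permutations restrict to the same automorphism of the
height-`n` subtree. -/
def AgreeUpTo {V : ℕ → Type*} (n : ℕ) (σ τ : ∀ k, Equiv.Perm (V k)) : Prop :=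
  ∀ k, k ≤ n → σ k = τ k

/-- The natural metric on automorphisms of a rooted `d`-ary tree:
`d(σ,τ) = inf { d!^{-(dⁿ-1)/(d-1)} : σ and τ agree on the height-n subtree }`. -/
def treeDist {V : ℕ → Type*} (d : ℕ) (σ τ : ∀ k, Equiv.Perm (V k)) : ℝ :=
  sInf {x : ℝ | ∃ n : ℕ, AgreeUpTo n σ τ ∧ x = treeScale d n}

/-- `N_{ε_n}(G)`: the least number of balls of radius `ε_n = treeScale d n` needed to
cover `G`. -/
def coverNum {V : ℕ → Type*} (d : ℕ) (G : Set (∀ k, Equiv.Perm (V k))) (n : ℕ) : ℕ :=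
  sInf {m : ℕ | ∃ s : Finset (∀ k, Equiv.Perm (V k)), s.card = m ∧
    G ⊆ ⋃ σ ∈ s, {τ | treeDist d σ τ ≤ treeScale d n}}

/-- The lower Minkowski dimension `liminf_{ε → 0} log N_ε(G) / log (1/ε)` (computed
along the scales `ε_n` of the metric). -/
def dimLower {V : ℕ → Type*} (d : ℕ) (G : Set (∀ k, Equiv.Perm (V k))) : ℝ :=
  Filter.liminf
    (fun n : ℕ => Real.log (coverNum d G n : ℝ) / Real.log (1 / treeScale d n)) Filter.atTop

/-- The upper Minkowski dimension `limsup_{ε → 0} log N_ε(G) / log (1/ε)` (computed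
along the scales `ε_n` of the metric). -/
def dimUpper {V : ℕ → Type*} (d : ℕ) (G : Set (∀ k, Equiv.Perm (V k))) : ℝ :=
  Filter.limsup
    (fun n : ℕ => Real.log (coverNum d G n : ℝ) / Real.log (1 / treeScale d n)) Filter.atTop

/-- The Minkowski dimension of `G` exists and equals `x`. -/
def HasDim {V : ℕ → Type*} (d : ℕ) (G : Set (∀ k, Equiv.Perm (V k))) (x : ℝ) : Prop :=
  dimLower d G = x ∧ dimUpper d G = x

/-- `G` is closed for the natural metric. -/
def IsDistClosed {V : ℕ → Type*} (d : ℕ) (G : Set (∀ k, Equiv.Perm (V k))) : Prop :=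
  ∀ σ, (∀ ε : ℝ, 0 < ε → ∃ τ ∈ G, treeDist d σ τ ≤ ε) → σ ∈ G

/-- The closure of `G` for the natural metric. -/
def distClosure {V : ℕ → Type*} (d : ℕ) (G : Set (∀ k, Equiv.Perm (V k))) :
    Set (∀ k, Equiv.Perm (V k)) :=
  {σ | ∀ ε : ℝ, 0 < ε → ∃ τ ∈ G, treeDist d σ τ ≤ ε}

/-- `|r_n(G)|`: the cardinality of the restriction of `G` to the height-`n` subtree. -/
def levelCard {V : ℕ → Type*} (G : Set (∀ k, Equiv.Perm (V k))) (n : ℕ) : ℕ :=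
  Nat.card ((fun (σ : ∀ k, Equiv.Perm (V k)) (k : Fin (n + 1)) => σ k.1) '' G)

end
noncomputable section

/-- An infinite `d`-ary rooted tree, presented by its levels: `V n` is the set of
level-`n` vertices, `parent` maps a vertex to its parent, there is a unique root,
and every vertex has at least `1` and at most `d` children. -/
structure DaryTree (d : ℕ) where
  V : ℕ → Type
  parent : ∀ n, V (n + 1) → V n
  root_card : Nat.card (V 0) = 1
  child_lb : ∀ n (v : V n), 1 ≤ Nat.card {w : V (n + 1) // parent n w = v}
  child_ub : ∀ n (v : V n), Nat.card {w : V (n + 1) // parent n w = v} ≤ d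

/-- The group of automorphisms of a rooted tree presented by levels and parent maps:
families of level permutations fixing the root level structure and commuting with
the parent maps. -/
def autGroup {V : ℕ → Type*} (parent : ∀ n, V (n + 1) → V n) :
    Subgroup (∀ n, Equiv.Perm (V n)) where
  carrier := {σ | ∀ n (v : V (n + 1)), parent n (σ (n + 1) v) = σ n (parent n v)}
  one_mem' := by intro n v; rfl
  mul_mem' := by
    intro a b ha hb n v
    simp only [Pi.mul_apply, Equiv.Perm.mul_apply]
    rw [ha, hb]
  inv_mem' := by
    intro a ha n v
    simp only [Pi.inv_apply]
    have h := ha n ((a (n + 1))⁻¹ v)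
    rw [show (a (n + 1)) ((a (n + 1))⁻¹ v) = v from (a (n + 1)).apply_symm_apply v] at h
    rw [h]; exact ((a n).symm_apply_apply _).symm

/-- The automorphism group `Aut(T)` of an infinite `d`-ary rooted tree. -/
def DaryTree.aut {d : ℕ} (T : DaryTree d) : Subgroup (∀ n, Equiv.Perm (T.V n)) :=
  autGroup T.parent

/-- A `d`-ary rooted tree is complete if every vertex has exactly `d` children. -/
def DaryTree.IsComplete {d : ℕ} (T : DaryTree d) : Prop :=
  ∀ n (v : T.V n), Nat.card {w : T.V (n + 1) // T.parent n w = v} = d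

end
/-! ### Auxiliary machinery for the proof -/

noncomputable section

lemma card_sigma_const {ι : Type*} [Finite ι] {β : ι → Type*} [∀ i, Finite (β i)] {c : ℕ}
    (h : ∀ i, Nat.card (β i) = c) : Nat.card (Σ i, β i) = Nat.card ι * c := by
  letI := Fintype.ofFinite ι
  letI := fun i => Fintype.ofFinite (β i)
  rw [Nat.card_eq_fintype_card, Fintype.card_sigma]
  simp only [← Nat.card_eq_fintype_card, h]
  rw [Finset.sum_const, Finset.card_univ, Nat.card_eq_fintype_card, smul_eq_mul]

lemma card_equiv_eq {α β : Type*} [Finite α] [Finite β] (h : Nat.card α = Nat.card β) :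
    Nat.card (α ≃ β) = (Nat.card α).factorial := by
  obtain ⟨e0⟩ := Finite.card_eq.mp h
  have : (α ≃ β) ≃ (α ≃ α) := Equiv.equivCongr (Equiv.refl α) e0.symm
  rw [Nat.card_congr this]
  letI := Fintype.ofFinite α
  rw [Nat.card_eq_fintype_card (α := α ≃ α)]
  have : Fintype.card (α ≃ α) = Fintype.card (Equiv.Perm α) := rfl
  rw [this, Fintype.card_perm, Nat.card_eq_fintype_card]

namespace ArbAux

variable {d : ℕ} (T : DaryTree d)

/-- The fiber of the parent map. -/
abbrev Fib (n : ℕ) (v : T.V n) : Type := {w : T.V (n + 1) // T.parent n w = v}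

lemma finiteFib (n : ℕ) (v : T.V n) : Finite (Fib T n v) :=
  Nat.finite_of_card_ne_zero (Nat.one_le_iff_ne_zero.mp (T.child_lb n v))

lemma finiteV : ∀ n, Finite (T.V n)
  | 0 => Nat.finite_of_card_ne_zero (by rw [T.root_card]; omega)
  | (n+1) => by
    haveI := finiteV n
    haveI := fun v => finiteFib T n v
    exact Finite.of_equiv _ (Equiv.sigmaFiberEquiv (T.parent n))

lemma subsingletonPermV0 : Subsingleton (Equiv.Perm (T.V 0)) := by
  have : Subsingleton (T.V 0) := by
    rcases Nat.card_eq_one_iff_exists.mp T.root_card with ⟨x, hx⟩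
    exact ⟨fun a b => (hx a).trans (hx b).symm⟩
  infer_instance

lemma cardV (hT : T.IsComplete) : ∀ n, Nat.card (T.V n) = d ^ n
  | 0 => by rw [T.root_card, pow_zero]
  | (n+1) => by
    haveI := finiteV T n
    haveI := fun v => finiteFib T n v
    rw [← Nat.card_congr (Equiv.sigmaFiberEquiv (T.parent n)),
      card_sigma_const (fun v => hT n v), cardV hT n, pow_succ]

lemma nonempty_fibEquiv (hT : T.IsComplete) {n : ℕ} (a b : T.V n) :
    Nonempty (Fib T n a ≃ Fib T n b) := by
  haveI := finiteFib T n a; haveI := finiteFib T n b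
  exact Finite.card_eq.mp (by rw [hT, hT])

lemma liftPerm (hT : T.IsComplete) (k : ℕ) (π : Equiv.Perm (T.V k)) :
    ∃ ρ : Equiv.Perm (T.V (k+1)), ∀ w, T.parent k (ρ w) = π (T.parent k w) := by
  have e : ∀ c, Fib T k (π.symm c) ≃ Fib T k c := fun c => (nonempty_fibEquiv T hT _ _).some
  let E : ∀ c, {a : T.V (k+1) // π (T.parent k a) = c} ≃ {b : T.V (k+1) // T.parent k b = c} :=
    fun c => (Equiv.subtypeEquivRight (fun a => π.apply_eq_iff_eq_symm_apply)).trans (e c)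
  exact ⟨Equiv.ofFiberEquiv E, fun w => Equiv.ofFiberEquiv_map E w⟩

/-- Permutations of level `n+1` lying over the permutation `π` of level `n`. -/
def Sset (n : ℕ) (π : Equiv.Perm (T.V n)) : Set (Equiv.Perm (T.V (n+1))) :=
  {ρ | ∀ w, T.parent n (ρ w) = π (T.parent n w)}

variable {T} in
/-- The family of fiber equivalences induced by an element of `Sset`. -/
def fibPerm {n : ℕ} (π : Equiv.Perm (T.V n)) (ρ : Sset T n π) (v : T.V n) :
    Fib T n v ≃ Fib T n (π v) where
  toFun x := ⟨ρ.1 x.1, by rw [ρ.2 x.1, x.2]⟩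
  invFun y := ⟨ρ.1.symm y.1, by
    apply π.injective
    rw [← ρ.2 (ρ.1.symm y.1), Equiv.apply_symm_apply]
    exact y.2⟩
  left_inv x := Subtype.ext (ρ.1.symm_apply_apply x.1)
  right_inv y := Subtype.ext (ρ.1.apply_symm_apply y.1)

lemma fibPerm_val_congr {n : ℕ} {π : Equiv.Perm (T.V n)}
    (E' : ∀ v, Fib T n v ≃ Fib T n (π v)) {a b : T.V n} (h : a = b) (w : T.V (n+1))
    (p : T.parent n w = a) (q : T.parent n w = b) : (E' a ⟨w, p⟩).1 = (E' b ⟨w, q⟩).1 := by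
  subst h; rfl

lemma card_Sset (hT : T.IsComplete) (n : ℕ) (π : Equiv.Perm (T.V n)) :
    Nat.card (Sset T n π) = d.factorial ^ d ^ n := by
  haveI := finiteV T n
  haveI := finiteV T (n+1)
  haveI := fun v => finiteFib T n v
  have hbij : Function.Bijective (fun ρ : Sset T n π => fibPerm π ρ) := by
    constructor
    · intro ρ1 ρ2 h
      apply Subtype.ext; apply Equiv.ext; intro w
      have h2 := congrArg (fun E => ((E (T.parent n w) ⟨w, rfl⟩ :
        Fib T n (π (T.parent n w))).1 : T.V (n+1))) h
      exact h2
    · intro E'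
      let E : ∀ c, {a : T.V (n+1) // π (T.parent n a) = c} ≃ {b : T.V (n+1) // T.parent n b = c} :=
        fun c => (Equiv.subtypeEquivRight (fun a => π.apply_eq_iff_eq_symm_apply)).trans
          ((E' (π.symm c)).trans (Equiv.subtypeEquivRight (fun b => by
            rw [Equiv.apply_symm_apply])))
      have hρ : ∀ w, T.parent n (Equiv.ofFiberEquiv E w) = π (T.parent n w) :=
        fun w => Equiv.ofFiberEquiv_map E w
      refine ⟨⟨Equiv.ofFiberEquiv E, hρ⟩, ?_⟩
      funext v
      apply Equiv.ext; intro x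
      apply Subtype.ext
      show Equiv.ofFiberEquiv E x.1 = (E' v x).1
      have hx : (⟨x.1, x.2⟩ : Fib T n v) = x := rfl
      simp only [Equiv.ofFiberEquiv, Equiv.trans_apply, Equiv.sigmaCongrRight_apply,
        Equiv.sigmaFiberEquiv, Equiv.coe_fn_mk, Equiv.coe_fn_symm_mk, E,
        Equiv.subtypeEquivRight]
      rw [← hx]
      have hsym : π.symm (π (T.parent n x.1)) = v := by
        rw [Equiv.symm_apply_apply]; exact x.2
      exact fibPerm_val_congr T E' hsym x.1 _ _
  rw [Nat.card_eq_of_bijective _ hbij]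
  letI := Fintype.ofFinite (T.V n)
  rw [Nat.card_pi]
  have : ∀ v : T.V n, Nat.card (Fib T n v ≃ Fib T n (π v)) = d.factorial := by
    intro v
    rw [card_equiv_eq (by rw [hT, hT]), hT]
  rw [Finset.prod_congr rfl (fun v _ => this v), Finset.prod_const, Finset.card_univ,
    ← Nat.card_eq_fintype_card, cardV T hT n]

lemma exists_aut_extend (hT : T.IsComplete) (n : ℕ) (f : ∀ k, Equiv.Perm (T.V k))
    (hf : ∀ k, k + 1 ≤ n → ∀ v, T.parent k (f (k+1) v) = f k (T.parent k v)) :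
    ∃ g ∈ T.aut, ∀ k, k ≤ n → g k = f k := by
  let g : ∀ k, Equiv.Perm (T.V k) := fun k => Nat.rec (f 0)
    (fun k gk => if h : k + 1 ≤ n then f (k+1) else (liftPerm T hT k gk).choose) k
  have hg : ∀ k, k ≤ n → g k = f k := by
    intro k hk
    cases k with
    | zero => rfl
    | succ k =>
      show (if h : k + 1 ≤ n then f (k+1) else _) = f (k+1)
      rw [dif_pos hk]
  refine ⟨g, ?_, hg⟩
  intro k v
  by_cases h : k + 1 ≤ n
  · show T.parent k ((g (k+1)) v) = g k (T.parent k v)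
    rw [hg _ h, hg _ (by omega)]
    exact hf k h v
  · show T.parent k ((if h : k + 1 ≤ n then f (k+1) else (liftPerm T hT k (g k)).choose) v)
      = g k (T.parent k v)
    rw [dif_neg h]
    exact (liftPerm T hT k (g k)).choose_spec v

/-- Restriction of a family of level permutations to levels `0,…,n`. -/
def res (n : ℕ) : (∀ k, Equiv.Perm (T.V k)) → (∀ k : Fin (n+1), Equiv.Perm (T.V k.1)) :=
  fun σ k => σ k.1

lemma card_res_aut (hT : T.IsComplete) :
    ∀ n, Nat.card (res T n '' (T.aut : Set (∀ k, Equiv.Perm (T.V k))))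
      = d.factorial ^ scaleExp d n
  | 0 => by
    haveI : ∀ k : Fin 1, Subsingleton (Equiv.Perm (T.V k.1)) := by
      intro k
      obtain ⟨k, hk⟩ := k
      have : k = 0 := Nat.lt_one_iff.mp hk
      subst this
      exact subsingletonPermV0 T
    haveI : Subsingleton (∀ k : Fin 1, Equiv.Perm (T.V k.1)) := inferInstance
    have h1 : Nat.card ↥(res T 0 '' (T.aut : Set (∀ k, Equiv.Perm (T.V k)))) = 1 := by
      rw [Nat.card_eq_one_iff_unique]
      exact ⟨inferInstance, ⟨⟨res T 0 1, ⟨1, T.aut.one_mem, rfl⟩⟩⟩⟩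
    rw [h1]
    simp [scaleExp]
  | (n+1) => by
    classical
    haveI := finiteV T n
    haveI := finiteV T (n+1)
    haveI : ∀ k : ℕ, Finite (Equiv.Perm (T.V k)) := fun k => by
      haveI := finiteV T k; infer_instance
    set In : Set (∀ k : Fin (n+1), Equiv.Perm (T.V k.1)) :=
      res T n '' (T.aut : Set (∀ k, Equiv.Perm (T.V k))) with hIn
    set In1 : Set (∀ k : Fin (n+2), Equiv.Perm (T.V k.1)) :=
      res T (n+1) '' (T.aut : Set (∀ k, Equiv.Perm (T.V k))) with hIn1
    haveI : Finite ↥In1 := Subtype.finite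
    haveI : Finite ↥In := Subtype.finite
    have hΦmem : ∀ τ : ↥In1, (fun k : Fin (n+1) => τ.1 k.castSucc) ∈ In := by
      rintro ⟨τ, g, hg, rfl⟩
      exact ⟨g, hg, rfl⟩
    set Φ : ↥In1 → ↥In := fun τ => ⟨fun k => τ.1 k.castSucc, hΦmem τ⟩ with hΦ
    have key : ∀ σ : ↥In, Nat.card {τ : ↥In1 // Φ τ = σ}
        = d.factorial ^ d ^ n := by
      intro σ
      set πσ : Equiv.Perm (T.V n) := σ.1 ⟨n, n.lt_succ_self⟩ with hπσ
      have hmem : ∀ τ : {τ : ↥In1 // Φ τ = σ},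
          (τ.1.1 (Fin.last (n+1))) ∈ Sset T n πσ := by
        rintro ⟨⟨τ, hτ⟩, hΦτ⟩
        obtain ⟨g, hg, rfl⟩ := hτ
        intro w
        have h2 : πσ = g n := by
          rw [hπσ, ← hΦτ]
          rfl
        show T.parent n (g (n+1) w) = πσ (T.parent n w)
        rw [h2]
        exact hg n w
      have hbij : Function.Bijective
          (fun τ : {τ : ↥In1 // Φ τ = σ} =>
            (⟨τ.1.1 (Fin.last (n+1)), hmem τ⟩ : Sset T n πσ)) := by
        constructor
        · rintro τ1 τ2 h
          apply Subtype.ext; apply Subtype.ext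
          funext k
          obtain ⟨k, hk⟩ := k
          by_cases hk' : k < n + 1
          · have h3 := congrArg (fun σ' : ↥In => σ'.1 ⟨k, hk'⟩) (τ1.2.trans τ2.2.symm)
            exact h3
          · have hkk : k = n + 1 := by omega
            subst hkk
            exact congrArg Subtype.val h
        · rintro ⟨ρ, hρ⟩
          obtain ⟨g, hgaut, hgres⟩ := σ.2
          set f : ∀ k, Equiv.Perm (T.V k) := Function.update g (n+1) ρ with hfdef
          have hfn1 : f (n+1) = ρ := Function.update_self _ _ _
          have hfk : ∀ k, k ≠ n + 1 → f k = g k := fun k hk =>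
            Function.update_of_ne hk _ _
          have hπg : πσ = g n := by
            rw [hπσ, ← hgres]; rfl
          have hf : ∀ k, k + 1 ≤ n + 1 → ∀ v,
              T.parent k (f (k+1) v) = f k (T.parent k v) := by
            intro k hk v
            by_cases hkn : k + 1 = n + 1
            · have hk0 : k = n := by omega
              subst hk0
              rw [hfn1, hfk k (by omega)]
              rw [hρ v, hπg]
            · rw [hfk (k+1) hkn, hfk k (by omega)]
              exact hgaut k v
          obtain ⟨g', hg'aut, hg'⟩ := exists_aut_extend T hT (n+1) f hf
          have hmem1 : res T (n+1) g' ∈ In1 := ⟨g', hg'aut, rfl⟩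
          have hΦeq : Φ ⟨res T (n+1) g', hmem1⟩ = σ := by
            apply Subtype.ext
            funext k
            obtain ⟨k, hk⟩ := k
            show g' k = σ.1 ⟨k, hk⟩
            rw [hg' k (by omega), hfk k (by omega), ← hgres]
            rfl
          refine ⟨⟨⟨res T (n+1) g', hmem1⟩, hΦeq⟩, ?_⟩
          apply Subtype.ext
          show g' (n+1) = ρ
          rw [hg' (n+1) le_rfl, hfn1]
      rw [Nat.card_eq_of_bijective _ hbij, card_Sset T hT n πσ]
    have hsig : Nat.card ↥In1 = Nat.card ↥In * d.factorial ^ d ^ n := by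
      rw [Nat.card_congr (Equiv.sigmaFiberEquiv Φ).symm]
      exact card_sigma_const key
    rw [hsig, card_res_aut hT n]
    have hse : scaleExp d (n+1) = scaleExp d n + d ^ n := by
      simp [scaleExp, Finset.sum_range_succ]
    rw [hse, pow_add]

end ArbAux

section Metric

variable {d : ℕ} {V : ℕ → Type*}

lemma factorial_one_lt (hd : 2 ≤ d) : (1 : ℝ) < (d.factorial : ℝ) := by
  have : 2 ≤ d.factorial := le_trans hd (Nat.self_le_factorial d)
  exact_mod_cast lt_of_lt_of_le one_lt_two (by exact_mod_cast this)

lemma treeScale_pos (n : ℕ) : 0 < treeScale d n := by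
  unfold treeScale
  have h1 : (0:ℝ) < (d.factorial : ℝ) := by exact_mod_cast d.factorial_pos
  positivity

lemma scaleExp_lt (hd : 2 ≤ d) {m n : ℕ} (h : m < n) : scaleExp d m < scaleExp d n := by
  apply Finset.sum_lt_sum_of_subset (Finset.range_subset_range.mpr h.le) (i := m)
  · exact Finset.mem_range.mpr h
  · exact Finset.notMem_range_self
  · positivity
  · intro j _ _; positivity

lemma scaleExp_le_self (n : ℕ) (hd : 2 ≤ d) : n ≤ scaleExp d n := by
  calc n = ∑ _i ∈ Finset.range n, 1 := by simp
  _ ≤ scaleExp d n := Finset.sum_le_sum (fun i _ => Nat.one_le_pow i d (by omega))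

lemma treeScale_lt (hd : 2 ≤ d) {m n : ℕ} (h : m < n) : treeScale d n < treeScale d m := by
  unfold treeScale
  apply inv_strictAnti₀
  · positivity
  · exact pow_lt_pow_right₀ (factorial_one_lt hd) (scaleExp_lt hd h)

lemma treeScale_le (hd : 2 ≤ d) {m n : ℕ} (h : m ≤ n) : treeScale d n ≤ treeScale d m := by
  rcases eq_or_lt_of_le h with rfl | h
  · exact le_rfl
  · exact (treeScale_lt hd h).le

lemma agreeUpTo_zero (h0 : Subsingleton (Equiv.Perm (V 0))) (σ τ : ∀ k, Equiv.Perm (V k)) :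
    AgreeUpTo 0 σ τ := by
  intro k hk
  have : k = 0 := Nat.le_zero.mp hk
  subst this
  exact Subsingleton.elim _ _

lemma treeDist_le_iff (hd : 2 ≤ d) (h0 : Subsingleton (Equiv.Perm (V 0)))
    (σ τ : ∀ k, Equiv.Perm (V k)) (n : ℕ) :
    treeDist d σ τ ≤ treeScale d n ↔ AgreeUpTo n σ τ := by
  have hbdd : BddBelow {x : ℝ | ∃ m : ℕ, AgreeUpTo m σ τ ∧ x = treeScale d m} := by
    refine ⟨0, ?_⟩
    rintro x ⟨m, _, rfl⟩
    exact (treeScale_pos m).le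
  have hne : treeScale d 0 ∈ {x : ℝ | ∃ m : ℕ, AgreeUpTo m σ τ ∧ x = treeScale d m} :=
    ⟨0, agreeUpTo_zero h0 σ τ, rfl⟩
  constructor
  · intro h
    by_contra hA
    have hn : n ≠ 0 := by
      rintro rfl
      exact hA (agreeUpTo_zero h0 σ τ)
    have hlb : ∀ x ∈ {x : ℝ | ∃ m : ℕ, AgreeUpTo m σ τ ∧ x = treeScale d m},
        treeScale d (n-1) ≤ x := by
      rintro x ⟨m, hm, rfl⟩
      have hmn : m ≤ n - 1 := by
        by_contra hc
        exact hA (fun k hk => hm k (le_trans hk (by omega)))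
      exact treeScale_le hd hmn
    have h1 : treeScale d (n-1) ≤ treeDist d σ τ := le_csInf ⟨_, hne⟩ hlb
    have h2 : treeScale d n < treeScale d (n-1) := treeScale_lt hd (by omega)
    have := h1.trans h
    linarith
  · intro hA
    exact csInf_le hbdd ⟨n, hA, rfl⟩

lemma agree_iff_res_eq {n : ℕ} (σ τ : ∀ k, Equiv.Perm (V k)) :
    AgreeUpTo n σ τ ↔ (fun k : Fin (n+1) => σ k.1) = (fun k : Fin (n+1) => τ k.1) := by
  constructor
  · intro h
    funext k
    exact h k.1 (by omega)
  · intro h k hk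
    exact congrFun h ⟨k, by omega⟩

lemma coverNum_eq_levelCard (hd : 2 ≤ d) [∀ k, Finite (V k)]
    (h0 : Subsingleton (Equiv.Perm (V 0))) (G : Set (∀ k, Equiv.Perm (V k)))
    (hG : G.Nonempty) (n : ℕ) : coverNum d G n = levelCard G n := by
  classical
  set R : (∀ k, Equiv.Perm (V k)) → ∀ k : Fin (n+1), Equiv.Perm (V k.1) :=
    fun σ k => σ k.1 with hR
  haveI : ∀ k : Fin (n+1), Finite (Equiv.Perm (V k.1)) := fun k => by infer_instance
  haveI : Finite (∀ k : Fin (n+1), Equiv.Perm (V k.1)) := inferInstance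
  haveI : Finite ↥(R '' G) := Subtype.finite
  letI := Fintype.ofFinite ↥(R '' G)
  have hsec : ∀ y : ↥(R '' G), ∃ σ, σ ∈ G ∧ R σ = y := fun y => y.2
  choose sec hsecG hsecR using hsec
  have hinj : Function.Injective sec := by
    intro y1 y2 h
    apply Subtype.ext
    rw [← hsecR y1, ← hsecR y2, h]
  set s : Finset (∀ k, Equiv.Perm (V k)) := Finset.univ.image sec with hs
  have hcards : s.card = levelCard G n := by
    rw [hs, Finset.card_image_of_injective _ hinj, Finset.card_univ, levelCard,
      Nat.card_eq_fintype_card]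
  have hcover : G ⊆ ⋃ σ ∈ s, {τ | treeDist d σ τ ≤ treeScale d n} := by
    intro τ hτ
    have hy : R τ ∈ R '' G := ⟨τ, hτ, rfl⟩
    refine Set.mem_biUnion (Finset.mem_image.mpr ⟨⟨R τ, hy⟩, Finset.mem_univ _, rfl⟩) ?_
    show treeDist d (sec ⟨R τ, hy⟩) τ ≤ treeScale d n
    rw [treeDist_le_iff hd h0, agree_iff_res_eq]
    exact hsecR ⟨R τ, hy⟩
  have hmem : levelCard G n ∈ {m : ℕ | ∃ s : Finset (∀ k, Equiv.Perm (V k)), s.card = m ∧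
      G ⊆ ⋃ σ ∈ s, {τ | treeDist d σ τ ≤ treeScale d n}} := ⟨s, hcards, hcover⟩
  apply le_antisymm
  · exact Nat.sInf_le hmem
  · apply le_csInf ⟨_, hmem⟩
    rintro m ⟨t, rfl, hcov⟩
    have hsub : R '' G ⊆ R '' ↑t := by
      rintro y ⟨τ, hτ, rfl⟩
      obtain ⟨σ, hσt, hστ⟩ := Set.mem_iUnion₂.mp (hcov hτ)
      refine ⟨σ, hσt, ?_⟩
      exact (agree_iff_res_eq σ τ).mp ((treeDist_le_iff hd h0 σ τ n).mp hστ)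
    calc levelCard G n = (R '' G).ncard := rfl
    _ ≤ (R '' ↑t).ncard := Set.ncard_le_ncard hsub ((t.finite_toSet).image R)
    _ ≤ (t : Set (∀ k, Equiv.Perm (V k))).ncard := Set.ncard_image_le t.finite_toSet
    _ = t.card := Set.ncard_coe_finset t

end Metric

namespace ArbAux

variable {d : ℕ} (T : DaryTree d)

lemma res_mul (n : ℕ) (a b : ∀ k, Equiv.Perm (T.V k)) :
    res T n (a * b) = res T n a * res T n b := rfl

lemma levelCard_le (G : Subgroup (∀ k, Equiv.Perm (T.V k))) (hGsub : G ≤ T.aut) (n : ℕ) :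
    levelCard (G : Set (∀ k, Equiv.Perm (T.V k))) n
      ≤ Nat.card (res T n '' (T.aut : Set (∀ k, Equiv.Perm (T.V k)))) := by
  haveI : ∀ k : ℕ, Finite (Equiv.Perm (T.V k)) := fun k => by
    haveI := finiteV T k; infer_instance
  have hsub : res T n '' (G : Set (∀ k, Equiv.Perm (T.V k)))
      ⊆ res T n '' (T.aut : Set (∀ k, Equiv.Perm (T.V k))) :=
    Set.image_mono hGsub
  have hfin : (res T n '' (T.aut : Set (∀ k, Equiv.Perm (T.V k)))).Finite :=
    Set.toFinite _
  exact Set.ncard_le_ncard hsub hfin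

lemma levelCard_lower (G : Subgroup (∀ k, Equiv.Perm (T.V k))) (hGsub : G ≤ T.aut)
    (hGfin : G.relIndex T.aut ≠ 0) (n : ℕ) :
    Nat.card (res T n '' (T.aut : Set (∀ k, Equiv.Perm (T.V k))))
      ≤ G.relIndex T.aut * levelCard (G : Set (∀ k, Equiv.Perm (T.V k))) n := by
  classical
  haveI : ∀ k : ℕ, Finite (Equiv.Perm (T.V k)) := fun k => by
    haveI := finiteV T k; infer_instance
  set Γ := ∀ k, Equiv.Perm (T.V k)
  set H' : Subgroup T.aut := G.subgroupOf T.aut with hH'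
  have hQcard : G.relIndex T.aut = Nat.card (T.aut ⧸ H') := rfl
  haveI : Finite (T.aut ⧸ H') := Nat.finite_of_card_ne_zero (by rw [← hQcard]; exact hGfin)
  set R : Γ → ∀ k : Fin (n+1), Equiv.Perm (T.V k.1) := res T n with hRdef
  have hch : ∀ y : ↥(R '' (T.aut : Set Γ)), ∃ a, a ∈ T.aut ∧ R a = y := fun y => y.2
  choose a haaut hRa using hch
  set q : ↥(R '' (T.aut : Set Γ)) → T.aut ⧸ H' :=
    fun y => QuotientGroup.mk ⟨a y, haaut y⟩ with hq
  set h : ↥(R '' (T.aut : Set Γ)) → Γ := fun y => (↑(q y).out)⁻¹ * a y with hh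
  have hhG : ∀ y, h y ∈ G := by
    intro y
    have h1 : QuotientGroup.mk ((q y).out) = q y := Quotient.out_eq _
    have h2 : ((q y).out)⁻¹ * ⟨a y, haaut y⟩ ∈ H' := QuotientGroup.eq.mp h1
    have h3 := Subgroup.mem_subgroupOf.mp h2
    exact h3
  set ψ : ↥(R '' (T.aut : Set Γ)) → (T.aut ⧸ H') × ↥(R '' (G : Set Γ)) :=
    fun y => (q y, ⟨R (h y), ⟨h y, hhG y, rfl⟩⟩) with hψ
  have hψinj : Function.Injective ψ := by
    intro y1 y2 hy
    have hq12 : q y1 = q y2 := congrArg Prod.fst hy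
    have hR12 : R (h y1) = R (h y2) := congrArg (fun z => (z.2 : ↥(R '' (G : Set Γ))).1) hy
    apply Subtype.ext
    have e1 : ∀ y : ↥(R '' (T.aut : Set Γ)), y.1 = R (↑(q y).out) * R (h y) := by
      intro y
      rw [← res_mul]
      have : (↑(q y).out : Γ) * h y = a y := by
        rw [hh]
        simp only [mul_inv_cancel_left]
      rw [this]
      exact (hRa y).symm
    rw [e1 y1, e1 y2, hq12, hR12]
  have hle := Nat.card_le_card_of_injective ψ hψinj
  rwa [Nat.card_prod, ← hQcard] at hle

end ArbAux



end
/-- **Finite-index subgroups of the automorphism group of the complete infinite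
`d`-ary rooted tree have Minkowski dimension `1`.** -/
theorem arboreal_finite_index_large {d : ℕ} (hd : 2 ≤ d) (T : DaryTree d)
    (hT : T.IsComplete) (G : Subgroup (∀ n, Equiv.Perm (T.V n))) (hGsub : G ≤ T.aut)
    (hGfin : G.relIndex T.aut ≠ 0) :
    HasDim d (G : Set (∀ n, Equiv.Perm (T.V n))) 1 := by

  classical
  haveI hfinV : ∀ k, Finite (T.V k) := fun k => ArbAux.finiteV T k
  haveI h0 : Subsingleton (Equiv.Perm (T.V 0)) := ArbAux.subsingletonPermV0 T
  have hGne : (G : Set (∀ k, Equiv.Perm (T.V k))).Nonempty := ⟨1, G.one_mem⟩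
  set M : ℕ := G.relIndex T.aut with hM
  set N : ℕ → ℕ := fun n => levelCard (G : Set (∀ k, Equiv.Perm (T.V k))) n with hN
  have hcov : ∀ n, coverNum d (G : Set (∀ k, Equiv.Perm (T.V k))) n = N n := fun n =>
    coverNum_eq_levelCard hd h0 _ hGne n
  have hA : ∀ n, Nat.card (ArbAux.res T n '' (T.aut : Set (∀ k, Equiv.Perm (T.V k))))
      = d.factorial ^ scaleExp d n := fun n => ArbAux.card_res_aut T hT n
  have hNle : ∀ n, N n ≤ d.factorial ^ scaleExp d n := fun n =>
    (ArbAux.levelCard_le T G hGsub n).trans (le_of_eq (hA n))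
  have hNge : ∀ n, d.factorial ^ scaleExp d n ≤ M * N n := fun n =>
    (le_of_eq (hA n).symm).trans (ArbAux.levelCard_lower T G hGsub hGfin n)
  have hfact2 : 2 ≤ d.factorial := le_trans hd (Nat.self_le_factorial d)
  have hN1 : ∀ n, 1 ≤ N n := by
    intro n
    rcases Nat.eq_zero_or_pos (N n) with h | h
    · exfalso
      have := hNge n
      rw [h, Nat.mul_zero, Nat.le_zero] at this
      exact absurd this (by positivity)
    · exact h
  set c : ℝ := Real.log d.factorial with hc
  have hcpos : 0 < c := Real.log_pos (factorial_one_lt hd)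
  have hden : ∀ n, Real.log (1 / treeScale d n) = (scaleExp d n : ℝ) * c := by
    intro n
    rw [treeScale, one_div, inv_inv, Real.log_pow]
  set f : ℕ → ℝ := fun n =>
    Real.log (coverNum d (G : Set (∀ k, Equiv.Perm (T.V k))) n : ℝ)
      / Real.log (1 / treeScale d n) with hf
  have hspos : ∀ n : ℕ, 1 ≤ n → 0 < (scaleExp d n : ℝ) * c := by
    intro n hn
    have h1 : 1 ≤ scaleExp d n := le_trans hn (scaleExp_le_self n hd)
    have : (1:ℝ) ≤ (scaleExp d n : ℝ) := by exact_mod_cast h1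
    nlinarith
  have hlogN_le : ∀ n, Real.log (N n : ℝ) ≤ (scaleExp d n : ℝ) * c := by
    intro n
    have h1 : (N n : ℝ) ≤ ((d.factorial ^ scaleExp d n : ℕ) : ℝ) := by exact_mod_cast hNle n
    have h2 := Real.log_le_log (by exact_mod_cast hN1 n) h1
    rwa [Nat.cast_pow, Real.log_pow] at h2
  have hlogN_ge : ∀ n, (scaleExp d n : ℝ) * c - Real.log (M : ℝ) ≤ Real.log (N n : ℝ) := by
    intro n
    have h1 : ((d.factorial ^ scaleExp d n : ℕ) : ℝ) ≤ ((M * N n : ℕ) : ℝ) := by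
      exact_mod_cast hNge n
    have hpos : (0:ℝ) < ((d.factorial ^ scaleExp d n : ℕ) : ℝ) := by positivity
    have h2 := Real.log_le_log hpos h1
    rw [Nat.cast_pow, Real.log_pow, Nat.cast_mul] at h2
    rw [Real.log_mul (Nat.cast_ne_zero.mpr hGfin)
      (Nat.cast_ne_zero.mpr (by have := hN1 n; omega))] at h2
    linarith
  have hub : ∀ n : ℕ, 1 ≤ n → f n ≤ 1 := by
    intro n hn
    rw [hf]
    simp only
    rw [hcov n, hden n]
    rw [div_le_one (hspos n hn)]
    exact hlogN_le n
  have hlb : ∀ n : ℕ, 1 ≤ n → 1 - Real.log (M : ℝ) / ((scaleExp d n : ℝ) * c) ≤ f n := by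
    intro n hn
    rw [hf]
    simp only
    rw [hcov n, hden n]
    have h2 := hspos n hn
    have heq : 1 - Real.log (M : ℝ) / ((scaleExp d n : ℝ) * c)
        = ((scaleExp d n : ℝ) * c - Real.log (M : ℝ)) / ((scaleExp d n : ℝ) * c) := by
      rw [sub_div, div_self (ne_of_gt h2)]
    rw [heq]
    exact (div_le_div_iff_of_pos_right h2).mpr (hlogN_ge n)
  have hlimlower : Filter.Tendsto
      (fun n : ℕ => 1 - Real.log (M : ℝ) / ((scaleExp d n : ℝ) * c))
      Filter.atTop (nhds 1) := by
    have hs : Filter.Tendsto (fun n : ℕ => ((scaleExp d n : ℕ) : ℝ))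
        Filter.atTop Filter.atTop := by
      apply Filter.tendsto_atTop_mono (fun n => ?_) tendsto_natCast_atTop_atTop
      exact_mod_cast scaleExp_le_self n hd
    have hsc : Filter.Tendsto (fun n : ℕ => ((scaleExp d n : ℕ) : ℝ) * c)
        Filter.atTop Filter.atTop := hs.atTop_mul_const hcpos
    have h00 : Filter.Tendsto
        (fun n : ℕ => Real.log (M : ℝ) / ((scaleExp d n : ℝ) * c))
        Filter.atTop (nhds 0) := Filter.Tendsto.div_atTop tendsto_const_nhds hsc
    simpa using h00.const_sub 1
  have hftend : Filter.Tendsto f Filter.atTop (nhds 1) := by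
    apply tendsto_of_tendsto_of_tendsto_of_le_of_le' hlimlower tendsto_const_nhds
    · exact Filter.eventually_atTop.mpr ⟨1, hlb⟩
    · exact Filter.eventually_atTop.mpr ⟨1, hub⟩
  have hdl : dimLower d (G : Set (∀ k, Equiv.Perm (T.V k))) = Filter.liminf f Filter.atTop := rfl
  have hdu : dimUpper d (G : Set (∀ k, Equiv.Perm (T.V k))) = Filter.limsup f Filter.atTop := rfl
  exact ⟨hdl.trans hftend.liminf_eq, hdu.trans hftend.limsup_eq⟩
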